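/- Let v ∈ S_d, and for α ≥ 2 an integer set λ := 1 + d(α-1) and a_n^{(1)}(v) := g_0^v(S_{n+d-1})/(n+d-1)!. Then for all k ∈ ℕ: |a_{αkd}^{(1)}(v) - (a_λ^{(1)}(v))^k| ≤ (k+2) · (a_λ^{(1)}(v))^{k-1}. -/

import Mathlib

open Finset MeasureTheory Polynomial

attribute [local instance] Classical.propDecidable

/-- `w` (restricted to positions `i, i+1, ..., i+d-1`) is a consecutive occurrence of the
pattern `v` (whose entries are `v 0, ..., v (d-1)`), i.e. the window is order-isomorphic
(respecting equalities) to the pattern. -/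
def consecOcc {α : Type*} [LinearOrder α] (d : ℕ) (v : ℕ → ℕ) (w : ℕ → α) (i : ℕ) : Prop :=
  ∀ p q, p < d → q < d →
    ((w (i + p) < w (i + q) ↔ v p < v q) ∧ (w (i + p) = w (i + q) ↔ v p = v q))

/-- number of consecutive occurrences of the pattern `v` of length `d` in the word `w`
of length `n`. -/
noncomputable def conCount {α : Type*} [LinearOrder α] (d n : ℕ) (v : ℕ → ℕ) (w : ℕ → α) : ℕ :=
  ((Finset.range n).filter (fun i => i + d ≤ n ∧ consecOcc d v w i)).card

/-- the word (ℕ-valued, 0-indexed) associated with a permutation of `Fin n`. -/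
def permWord {n : ℕ} (σ : Equiv.Perm (Fin n)) : ℕ → ℕ :=
  fun j => if h : j < n then (σ ⟨j, h⟩ : ℕ) else 0

/-- `g_r^v(S_n)`: number of permutations of length `n` with exactly `r` consecutive
occurrences of the pattern `v` (of length `d`). -/
noncomputable def gPerm (d : ℕ) (v : ℕ → ℕ) (n r : ℕ) : ℕ :=
  Nat.card {σ : Equiv.Perm (Fin n) // conCount d n v (permWord σ) = r}

/-- the word (ℕ-valued, 0-indexed) associated with a `k`-ary word of length `n`. -/
def wordFn {k n : ℕ} (w : Fin n → Fin k) : ℕ → ℕ :=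
  fun j => if h : j < n then (w ⟨j, h⟩ : ℕ) else 0

/-- `g_r^v([k]^n)`: number of `k`-ary words of length `n` with exactly `r` consecutive
occurrences of the pattern `v` (of length `d`). -/
noncomputable def gWord (d k n r : ℕ) (v : ℕ → ℕ) : ℕ :=
  Nat.card {w : Fin n → Fin k // conCount d n v (wordFn w) = r}

/-- `i` is in the overlap set `O_v` of the pattern `v` of length `d`:
`1 ≤ i < d` and the first `i` entries have the same relative order as the last `i` entries. -/
def inOverlap (d : ℕ) (v : ℕ → ℕ) (i : ℕ) : Prop :=
  1 ≤ i ∧ i < d ∧ ∀ p q, p < i → q < i → (v p < v q ↔ v (d - i + p) < v (d - i + q))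

lemma conCount_eq_zero_iff {β : Type*} [LinearOrder β] {d n : ℕ} (hd : 1 ≤ d) {u : ℕ → ℕ}
    {w : ℕ → β} :
    conCount d n u w = 0 ↔ ∀ i, i + d ≤ n → ¬ consecOcc d u w i := by
  unfold conCount
  rw [Finset.card_eq_zero, Finset.filter_eq_empty_iff]
  constructor
  · intro h i hi
    intro hocc
    exact h (Finset.mem_range.mpr (by omega)) ⟨hi, hocc⟩
  · intro h x hx
    push_neg
    intro h2
    exact h x h2

lemma consecOcc_congr {β γ : Type*} [LinearOrder β] [LinearOrder γ] {d : ℕ} {u : ℕ → ℕ}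
    {w : ℕ → β} {w' : ℕ → γ} {i j : ℕ}
    (h : ∀ p q, p < d → q < d →
      ((w (i + p) < w (i + q) ↔ w' (j + p) < w' (j + q)) ∧
       (w (i + p) = w (i + q) ↔ w' (j + p) = w' (j + q)))) :
    consecOcc d u w i ↔ consecOcc d u w' j := by
  unfold consecOcc
  constructor <;> intro hc p q hp hq <;> have h1 := h p q hp hq <;> have h2 := hc p q hp hq <;>
    constructor <;> tauto

section blocks
variable (M N : ℕ)

/-- the set of values of a permutation of `Fin (M+N)` on the first `M` positions. -/
def blockSet (σ : Equiv.Perm (Fin (M + N))) : Finset (Fin (M + N)) :=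
  Finset.univ.map ⟨fun i : Fin M => σ (Fin.castAdd N i),
    fun a b h => by
      have := σ.injective h
      exact Fin.ext (by simpa [Fin.castAdd] using congrArg Fin.val this)⟩

lemma card_blockSet (σ : Equiv.Perm (Fin (M + N))) : (blockSet M N σ).card = M := by
  simp [blockSet]

lemma card_blockSet_compl (σ : Equiv.Perm (Fin (M + N))) : (blockSet M N σ)ᶜ.card = N := by
  simp [Finset.card_compl, card_blockSet]

lemma mem_blockSet (σ : Equiv.Perm (Fin (M + N))) (i : Fin M) :
    σ (Fin.castAdd N i) ∈ blockSet M N σ := by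
  simp [blockSet]
  exact ⟨i, rfl⟩

lemma mem_blockSet_compl (σ : Equiv.Perm (Fin (M + N))) (i : Fin N) :
    σ (Fin.natAdd M i) ∈ (blockSet M N σ)ᶜ := by
  simp only [Finset.mem_compl, blockSet, Finset.mem_map, Finset.mem_univ, true_and,
    Function.Embedding.coeFn_mk, not_exists]
  intro a ha
  have := σ.injective ha
  have := congrArg Fin.val this
  simp [Fin.castAdd, Fin.natAdd, Fin.castLE] at this
  omega

/-- standardization of the first block -/
noncomputable def stdFirst (σ : Equiv.Perm (Fin (M + N))) : Equiv.Perm (Fin M) :=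
  Equiv.ofBijective
    (fun i => ((blockSet M N σ).orderIsoOfFin (card_blockSet M N σ)).symm
      ⟨σ (Fin.castAdd N i), mem_blockSet M N σ i⟩)
    (Finite.injective_iff_bijective.mp (by
      intro a b h
      have := congrArg (((blockSet M N σ).orderIsoOfFin (card_blockSet M N σ))) h
      simp only [OrderIso.apply_symm_apply, Subtype.mk.injEq] at this
      have := σ.injective this
      exact Fin.ext (by simpa [Fin.castAdd] using congrArg Fin.val this)))

/-- standardization of the second block -/
noncomputable def stdSecond (σ : Equiv.Perm (Fin (M + N))) : Equiv.Perm (Fin N) :=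
  Equiv.ofBijective
    (fun i => (((blockSet M N σ)ᶜ).orderIsoOfFin (card_blockSet_compl M N σ)).symm
      ⟨σ (Fin.natAdd M i), mem_blockSet_compl M N σ i⟩)
    (Finite.injective_iff_bijective.mp (by
      intro a b h
      have := congrArg ((((blockSet M N σ)ᶜ).orderIsoOfFin (card_blockSet_compl M N σ))) h
      simp only [OrderIso.apply_symm_apply, Subtype.mk.injEq] at this
      have := σ.injective this
      exact Fin.ext (by simpa [Fin.natAdd] using congrArg Fin.val this)))

lemma stdFirst_spec (σ : Equiv.Perm (Fin (M + N))) (i : Fin M) :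
    (((blockSet M N σ).orderIsoOfFin (card_blockSet M N σ)) (stdFirst M N σ i) : Fin (M + N)) =
      σ (Fin.castAdd N i) := by
  simp [stdFirst, Equiv.ofBijective]

lemma stdSecond_spec (σ : Equiv.Perm (Fin (M + N))) (i : Fin N) :
    ((((blockSet M N σ)ᶜ).orderIsoOfFin (card_blockSet_compl M N σ)) (stdSecond M N σ i) :
      Fin (M + N)) = σ (Fin.natAdd M i) := by
  simp [stdSecond, Equiv.ofBijective]

end blocks

section blocks2
variable (M N : ℕ)

lemma stdFirst_lt_iff (σ : Equiv.Perm (Fin (M + N))) (i j : Fin M) :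
    ((stdFirst M N σ i : ℕ) < (stdFirst M N σ j : ℕ)) ↔
      ((σ (Fin.castAdd N i) : ℕ) < (σ (Fin.castAdd N j) : ℕ)) := by
  rw [← Fin.lt_iff_val_lt_val, ← Fin.lt_iff_val_lt_val,
    ← OrderIso.lt_iff_lt ((blockSet M N σ).orderIsoOfFin (card_blockSet M N σ)),
    ← Subtype.coe_lt_coe, stdFirst_spec, stdFirst_spec]

lemma stdFirst_eq_iff (σ : Equiv.Perm (Fin (M + N))) (i j : Fin M) :
    ((stdFirst M N σ i : ℕ) = (stdFirst M N σ j : ℕ)) ↔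
      ((σ (Fin.castAdd N i) : ℕ) = (σ (Fin.castAdd N j) : ℕ)) := by
  constructor
  · intro h
    have h2 : i = j := (stdFirst M N σ).injective (Fin.ext h)
    subst h2; rfl
  · intro h
    have h2 : Fin.castAdd N i = Fin.castAdd N j := σ.injective (Fin.ext h)
    have h3 : i = j := Fin.ext (by simpa [Fin.castAdd] using congrArg Fin.val h2)
    subst h3; rfl

lemma stdSecond_lt_iff (σ : Equiv.Perm (Fin (M + N))) (i j : Fin N) :
    ((stdSecond M N σ i : ℕ) < (stdSecond M N σ j : ℕ)) ↔
      ((σ (Fin.natAdd M i) : ℕ) < (σ (Fin.natAdd M j) : ℕ)) := by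
  rw [← Fin.lt_iff_val_lt_val, ← Fin.lt_iff_val_lt_val,
    ← OrderIso.lt_iff_lt (((blockSet M N σ)ᶜ).orderIsoOfFin (card_blockSet_compl M N σ)),
    ← Subtype.coe_lt_coe, stdSecond_spec, stdSecond_spec]

lemma stdSecond_eq_iff (σ : Equiv.Perm (Fin (M + N))) (i j : Fin N) :
    ((stdSecond M N σ i : ℕ) = (stdSecond M N σ j : ℕ)) ↔
      ((σ (Fin.natAdd M i) : ℕ) = (σ (Fin.natAdd M j) : ℕ)) := by
  constructor
  · intro h
    have h2 : i = j := (stdSecond M N σ).injective (Fin.ext h)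
    subst h2; rfl
  · intro h
    have h2 : Fin.natAdd M i = Fin.natAdd M j := σ.injective (Fin.ext h)
    have h3 : i = j := Fin.ext (by
      have := congrArg Fin.val h2
      simp [Fin.natAdd] at this
      omega)
    subst h3; rfl

lemma conCount_stdFirst {d : ℕ} (hd : 1 ≤ d) {u : ℕ → ℕ} (σ : Equiv.Perm (Fin (M + N)))
    (h : conCount d (M + N) u (permWord σ) = 0) :
    conCount d M u (permWord (stdFirst M N σ)) = 0 := by
  rw [conCount_eq_zero_iff hd] at h ⊢
  intro i hi hocc
  refine h i (by omega) ?_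
  refine (consecOcc_congr ?_).mp hocc
  intro p q hp hq
  have hp' : i + p < M := by omega
  have hq' : i + q < M := by omega
  rw [permWord, permWord, permWord, permWord, dif_pos hp', dif_pos hq',
    dif_pos (show i + p < M + N by omega), dif_pos (show i + q < M + N by omega)]
  have e1 : (⟨i + p, by omega⟩ : Fin (M + N)) = Fin.castAdd N ⟨i + p, hp'⟩ := Fin.ext rfl
  have e2 : (⟨i + q, by omega⟩ : Fin (M + N)) = Fin.castAdd N ⟨i + q, hq'⟩ := Fin.ext rfl
  rw [e1, e2]
  exact ⟨stdFirst_lt_iff M N σ _ _, stdFirst_eq_iff M N σ _ _⟩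

lemma conCount_stdSecond {d : ℕ} (hd : 1 ≤ d) {u : ℕ → ℕ} (σ : Equiv.Perm (Fin (M + N)))
    (h : conCount d (M + N) u (permWord σ) = 0) :
    conCount d N u (permWord (stdSecond M N σ)) = 0 := by
  rw [conCount_eq_zero_iff hd] at h ⊢
  intro i hi hocc
  refine h (M + i) (by omega) ?_
  refine (consecOcc_congr ?_).mp hocc
  intro p q hp hq
  have hp' : i + p < N := by omega
  have hq' : i + q < N := by omega
  rw [permWord, permWord, permWord, permWord, dif_pos hp', dif_pos hq',
    dif_pos (show M + i + p < M + N by omega), dif_pos (show M + i + q < M + N by omega)]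
  have e1 : (⟨M + i + p, by omega⟩ : Fin (M + N)) = Fin.natAdd M ⟨i + p, hp'⟩ :=
    Fin.ext (by simp [Fin.natAdd]; omega)
  have e2 : (⟨M + i + q, by omega⟩ : Fin (M + N)) = Fin.natAdd M ⟨i + q, hq'⟩ :=
    Fin.ext (by simp [Fin.natAdd]; omega)
  rw [e1, e2]
  exact ⟨stdSecond_lt_iff M N σ _ _, stdSecond_eq_iff M N σ _ _⟩

end blocks2

lemma orderIsoOfFin_congr {α : Type*} [LinearOrder α] {s t : Finset α} {k : ℕ}
    (h : s = t) (hs : s.card = k) (ht : t.card = k) (x : Fin k) :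
    (s.orderIsoOfFin hs x : α) = (t.orderIsoOfFin ht x : α) := by subst h; rfl

lemma gPerm_zero_add {d : ℕ} (hd : 1 ≤ d) (u : ℕ → ℕ) (M N : ℕ) :
    gPerm d u (M + N) 0 ≤ (M + N).choose M * (gPerm d u M 0 * gPerm d u N 0) := by
  classical
  have key : Nat.card {σ : Equiv.Perm (Fin (M + N)) // conCount d (M + N) u (permWord σ) = 0}
      ≤ Nat.card ({s : Finset (Fin (M + N)) // s.card = M} ×
        ({τ : Equiv.Perm (Fin M) // conCount d M u (permWord τ) = 0} ×
        {ρ : Equiv.Perm (Fin N) // conCount d N u (permWord ρ) = 0})) := by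
    apply Nat.card_le_card_of_injective
      (fun σ => (⟨blockSet M N σ.1, card_blockSet M N σ.1⟩,
        ⟨stdFirst M N σ.1, conCount_stdFirst M N hd σ.1 σ.2⟩,
        ⟨stdSecond M N σ.1, conCount_stdSecond M N hd σ.1 σ.2⟩))
    intro σ1 σ2 hEq
    simp only [Prod.mk.injEq, Subtype.mk.injEq] at hEq
    obtain ⟨h_s, hτ, hρ⟩ := hEq
    have h1 : ∀ i : Fin M, σ1.1 (Fin.castAdd N i) = σ2.1 (Fin.castAdd N i) := by
      intro i
      rw [← stdFirst_spec M N σ1.1 i, ← stdFirst_spec M N σ2.1 i, hτ]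
      exact orderIsoOfFin_congr h_s _ _ _
    have h2 : ∀ i : Fin N, σ1.1 (Fin.natAdd M i) = σ2.1 (Fin.natAdd M i) := by
      intro i
      rw [← stdSecond_spec M N σ1.1 i, ← stdSecond_spec M N σ2.1 i, hρ]
      exact orderIsoOfFin_congr (congrArg compl h_s) _ _ _
    exact Subtype.ext (Equiv.ext (fun x => Fin.addCases h1 h2 x))
  have h2 : gPerm d u (M + N) 0 ≤
      Nat.card {s : Finset (Fin (M + N)) // s.card = M} * (gPerm d u M 0 * gPerm d u N 0) := by
    simpa [Nat.card_prod, gPerm] using key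
  have h3 : Nat.card {s : Finset (Fin (M + N)) // s.card = M} = (M + N).choose M := by
    simp [Nat.card_eq_fintype_card, Fintype.card_finset_len]
  rwa [h3] at h2

lemma gPerm_le_factorial (d : ℕ) (u : ℕ → ℕ) (n : ℕ) : gPerm d u n 0 ≤ n.factorial := by
  rw [gPerm, Nat.card_eq_fintype_card]
  refine le_trans (Fintype.card_subtype_le _) (le_of_eq ?_)
  simp [Fintype.card_perm]

/-- For any `v ∈ S_d`, integer `α ≥ 2`, `λ = 1 + d(α-1)`, and
`a_n^{(1)}(v) = g_0^v(S_{n+d-1})/(n+d-1)!`: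
`|a_{αkd}^{(1)}(v) - (a_λ^{(1)}(v))^k| ≤ (k+2) (a_λ^{(1)}(v))^{k-1}` for all `k ∈ ℕ`. -/
theorem a_block_power_estimate (d : ℕ) (hd : 1 ≤ d) (v : Equiv.Perm (Fin d))
    (α : ℕ) (hα : 2 ≤ α)
    (a : ℕ → ℝ)
    (ha : ∀ m : ℕ, a m =
      (gPerm d (permWord v) (m + d - 1) 0 : ℝ) / (Nat.factorial (m + d - 1)))
    (k : ℕ) (hk : 1 ≤ k) :
    |a (α * k * d) - (a (1 + d * (α - 1))) ^ k| ≤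
      ((k : ℝ) + 2) * (a (1 + d * (α - 1))) ^ (k - 1) := by
  have ha0 : ∀ m, 0 ≤ a m := by
    intro m; rw [ha]; positivity
  have ha1 : ∀ m, a m ≤ 1 := by
    intro m
    rw [ha, div_le_one (by exact_mod_cast Nat.factorial_pos _)]
    exact_mod_cast gPerm_le_factorial d (permWord v) _
  have hsub : ∀ m n : ℕ, a (m + n + d - 1) ≤ a m * a n := by
    intro m n
    have hMN : m + n + d - 1 + d - 1 = (m + d - 1) + (n + d - 1) := by omega
    rw [ha, ha, ha, hMN]
    set M := m + d - 1 with hM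
    set N := n + d - 1 with hN
    have hkey := gPerm_zero_add hd (permWord v) M N
    have h1 : (gPerm d (permWord v) (M + N) 0 : ℝ) ≤
        ((M + N).choose M : ℝ) * (gPerm d (permWord v) M 0 * gPerm d (permWord v) N 0) := by
      exact_mod_cast hkey
    have hfac : ((M + N).choose M : ℝ) * ((M.factorial : ℝ) * N.factorial) =
        ((M + N).factorial : ℝ) := by
      have := Nat.choose_mul_factorial_mul_factorial (Nat.le_add_right M N)
      have h2 : (M + N).choose M * M.factorial * (M + N - M).factorial =
          (M + N).factorial := this
      rw [Nat.add_sub_cancel_left] at h2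
      exact_mod_cast by rw [← h2]; ring
    rw [div_mul_div_comm, div_le_div_iff₀
      (by exact_mod_cast Nat.factorial_pos _)
      (by positivity)]
    calc (gPerm d (permWord v) (M + N) 0 : ℝ) * ((M.factorial : ℝ) * N.factorial)
        ≤ (((M + N).choose M : ℝ) * (gPerm d (permWord v) M 0 * gPerm d (permWord v) N 0)) *
          ((M.factorial : ℝ) * N.factorial) := by
          apply mul_le_mul_of_nonneg_right h1 (by positivity)
      _ = ((gPerm d (permWord v) M 0 : ℝ) * gPerm d (permWord v) N 0) *
          (((M + N).choose M : ℝ) * ((M.factorial : ℝ) * N.factorial)) := by ring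
      _ = ((gPerm d (permWord v) M 0 : ℝ) * gPerm d (permWord v) N 0) *
          ((M + N).factorial : ℝ) := by rw [hfac]
  have hmono1 : ∀ n : ℕ, a (n + 1) ≤ a n := by
    intro n
    have hidx : n + 1 + d - 1 = (n + d - 1) + 1 := by omega
    rw [ha, ha, hidx]
    set M := n + d - 1 with hM
    have hA1 : gPerm d (permWord v) 1 0 ≤ 1 := by
      simpa using gPerm_le_factorial d (permWord v) 1
    have h1 : gPerm d (permWord v) (M + 1) 0 ≤ (M + 1) * gPerm d (permWord v) M 0 := by
      calc gPerm d (permWord v) (M + 1) 0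
          ≤ (M + 1).choose M * (gPerm d (permWord v) M 0 * gPerm d (permWord v) 1 0) :=
            gPerm_zero_add hd (permWord v) M 1
        _ ≤ (M + 1) * (gPerm d (permWord v) M 0 * 1) := by
            apply Nat.mul_le_mul
            · rw [Nat.choose_succ_self_right]
            · exact Nat.mul_le_mul_left _ hA1
        _ = (M + 1) * gPerm d (permWord v) M 0 := by ring
    have h1' : (gPerm d (permWord v) (M + 1) 0 : ℝ) ≤ (M + 1 : ℝ) * gPerm d (permWord v) M 0 := by
      exact_mod_cast h1
    rw [div_le_div_iff₀ (by exact_mod_cast Nat.factorial_pos _)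
      (by exact_mod_cast Nat.factorial_pos _), Nat.factorial_succ]
    have hMfac : (0:ℝ) ≤ (M.factorial : ℝ) := by positivity
    push_cast
    nlinarith [hMfac, h1']
  have hmono : ∀ m n : ℕ, m ≤ n → a n ≤ a m := by
    intro m n h
    induction n, h using Nat.le_induction with
    | base => exact le_refl _
    | succ n hmn ih => exact le_trans (hmono1 n) ih
  set L := 1 + d * (α - 1) with hL
  have hstep : ∀ j : ℕ, a (L + (j + 1) * (L + d - 1)) ≤ a (L + j * (L + d - 1)) * a L := by
    intro j
    have h := hsub (L + j * (L + d - 1)) L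
    have he : L + j * (L + d - 1) + L + d - 1 = L + (j + 1) * (L + d - 1) := by
      have : (j + 1) * (L + d - 1) = j * (L + d - 1) + (L + d - 1) := by ring
      omega
    rwa [he] at h
  have hchain : ∀ j : ℕ, a (L + j * (L + d - 1)) ≤ (a L) ^ (j + 1) := by
    intro j
    induction j with
    | zero => simp
    | succ j ih =>
      calc a (L + (j + 1) * (L + d - 1)) ≤ a (L + j * (L + d - 1)) * a L := hstep j
        _ ≤ (a L) ^ (j + 1) * a L := mul_le_mul_of_nonneg_right ih (ha0 L)
        _ = (a L) ^ (j + 1 + 1) := by ring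
  rcases Nat.lt_or_ge k 2 with hk2 | hk2
  · have hk1 : k = 1 := by omega
    subst hk1
    simp only [pow_one, Nat.sub_self, pow_zero, Nat.cast_one, mul_one]
    have h1 := ha0 (α * d); have h2 := ha1 (α * d)
    have h3 := ha0 L; have h4 := ha1 L
    rw [abs_le]
    constructor <;> nlinarith
  · obtain ⟨α', rfl⟩ : ∃ α', α = α' + 2 := ⟨α - 2, by omega⟩
    obtain ⟨k', rfl⟩ : ∃ k', k = k' + 2 := ⟨k - 2, by omega⟩
    have hidx : L + k' * (L + d - 1) ≤ (α' + 2) * (k' + 2) * d := by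
      have hLe : L = 1 + d * α' + d := by
        rw [hL]
        have : α' + 2 - 1 = α' + 1 := by omega
        rw [this]; ring
      rw [hLe]
      have h1 : (1 + d * α' + d) + d - 1 = d * α' + 2 * d := by omega
      have h2 : k' * ((1 + d * α' + d) + d - 1) = k' * (d * α') + k' * (2 * d) := by
        rw [h1]; ring
      have h3 : (α' + 2) * (k' + 2) * d =
          k' * (d * α') + k' * (2 * d) + 2 * (d * α') + 4 * d := by ring
      have h4 : 1 ≤ d * α' + 3 * d := by omega
      omega
    have hb : a ((α' + 2) * (k' + 2) * d) ≤ (a L) ^ (k' + 1) :=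
      le_trans (hmono _ _ hidx) (hchain k')
    have hP : (0:ℝ) ≤ (a L) ^ (k' + 1) := pow_nonneg (ha0 L) _
    have hy : (a L) ^ (k' + 2) ≤ (a L) ^ (k' + 1) := by
      have := pow_le_pow_of_le_one (ha0 L) (ha1 L) (show k' + 1 ≤ k' + 2 by omega)
      exact this
    have hy0 : (0:ℝ) ≤ (a L) ^ (k' + 2) := pow_nonneg (ha0 L) _
    have hx0 := ha0 ((α' + 2) * (k' + 2) * d)
    have hexp : k' + 2 - 1 = k' + 1 := by omega
    rw [hexp, abs_le]
    push_cast
    constructor <;> nlinarith
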